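/- For any real a₂₁ ≠ 0 with coefficients of the three-stage third-order family given by c₂ = a₂₁, c₃ a root of the Williamson constraint c₃²(1-c₂)+c₃(c₂²+c₂/2-1)+(1/3-c₂/2)=0 with c₂ ≠ 1, c₃ ∉ {0, c₂}, c₂ ≠ 2/3, and a₃₂, b₂, b₃ defined by the generic-branch formulas a₃₂ = c₃(c₃-c₂)/(c₂(2-3c₂)), b₂ = (3c₃-2)/(6c₂(c₃-c₂)), b₃ = (2-3c₂)/(6c₃(c₃-c₂)), the extra Lie group condition a₃₂c₂(1-c₂) = (3c₃-1)/6 holds. -/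

import Mathlib

theorem williamson_family_satisfies_lie_condition
    (a₂₁ c₂ c₃ : ℝ) (ha : a₂₁ ≠ 0) (hc2 : c₂ = a₂₁)
    (hW : c₃^2 * (1 - c₂) + c₃ * (c₂^2 + c₂/2 - 1) + (1/3 - c₂/2) = 0)
    (hc1 : c₂ ≠ 1) (hc30 : c₃ ≠ 0) (hc32 : c₃ ≠ c₂) (hc223 : c₂ ≠ 2/3)
    (a₃₂ b₂ b₃ : ℝ)
    (ha32 : a₃₂ = c₃ * (c₃ - c₂) / (c₂ * (2 - 3 * c₂)))
    (hb2 : b₂ = (3 * c₃ - 2) / (6 * c₂ * (c₃ - c₂)))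
    (hb3 : b₃ = (2 - 3 * c₂) / (6 * c₃ * (c₃ - c₂))) :
    a₃₂ * c₂ * (1 - c₂) = (3 * c₃ - 1) / 6 := by
  have hc0 : c₂ ≠ 0 := hc2 ▸ ha
  have h23 : 2 - 3 * c₂ ≠ 0 := by intro h; apply hc223; linarith
  subst ha32
  field_simp
  rw [div_eq_iff (by contrapose! h23; linarith)]
  linear_combination 6 * hW
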